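/- Let α₁,…,α_N > −1, let ℓ^{(αᵢ)} be the monic Laguerre orthogonal polynomial sequences, and let Qₙ be the matrix orthogonal polynomials of the setup built from the weights wᵢ(x) = e^{−x}x^{αᵢ} on (0,∞). Set B_L = diag(α₁+1,…,α_N+1) and K = Σ_{j=1}^{⌊N/2⌋} E_{2j,2j}. Then for all n ≥ 0 and all x: x·Qₙ''(x) + Qₙ'(x)·(B_L − xI + 2xA + x(A·B_L − B_L·A)) + Qₙ(x)·(A·B_L + K) = Λₙ·Qₙ(x), where Λₙ = diag(λ₁,…,λ_N) with λᵢ = −n for i odd and λᵢ = −n + 1 for i even. That is, Qₙ is an eigenfunction of the second-order differential operator D = ∂²xI + ∂(B_L − xI + 2xA + x[A,B_L]) + A·B_L + K. -/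

import Mathlib

open MeasureTheory Matrix Polynomial

noncomputable section

/-- The staircase nilpotent matrix `A = ∑ a_{2j-1} E_{2j-1,2j} + ∑ a_{2j} E_{2j+1,2j}`
(1-based indices, here realized with 0-based `Fin N` indices). -/
def nilA (N : ℕ) (a : ℕ → ℝ) : Matrix (Fin N) (Fin N) ℝ :=
  Matrix.of fun i k =>
    if k.val % 2 = 1 ∧ i.val + 1 = k.val then a k.val
    else if k.val % 2 = 1 ∧ i.val = k.val + 1 then a i.val
    else 0

/-- `Pₙ(x) = diag(pₙ¹(x), …, pₙᴺ(x))`. -/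
def diagP {N : ℕ} (p : Fin N → ℕ → Polynomial ℝ) (n : ℕ) (x : ℝ) :
    Matrix (Fin N) (Fin N) ℝ :=
  Matrix.diagonal fun i => (p i n).eval x

/-- `‖Pₙ‖² = diag(‖pₙ¹‖², …, ‖pₙᴺ‖²)` where `‖pₙⁱ‖² = ∫_S pₙⁱ(x)² wᵢ(x) dx`. -/
def nsq {N : ℕ} (S : Set ℝ) (w : Fin N → ℝ → ℝ) (p : Fin N → ℕ → Polynomial ℝ)
    (n : ℕ) : Matrix (Fin N) (Fin N) ℝ :=
  Matrix.diagonal fun i => ∫ x in S, (p i n).eval x ^ 2 * w i x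

/-- The matrix polynomials
`Qₙ(x) = Pₙ(x) + A Pₙ₊₁(x) − ‖Pₙ‖² Aᵀ ‖Pₙ₋₁‖⁻² Pₙ₋₁(x) − Pₙ(x) A x
        + ‖Pₙ‖² Aᵀ ‖Pₙ₋₁‖⁻² Pₙ₋₁(x) A x`,
with the terms containing `‖P₋₁‖⁻²` set to `0` when `n = 0`. -/
def matQ {N : ℕ} (S : Set ℝ) (w : Fin N → ℝ → ℝ) (p : Fin N → ℕ → Polynomial ℝ)
    (a : ℕ → ℝ) (n : ℕ) (x : ℝ) : Matrix (Fin N) (Fin N) ℝ :=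
  let A := nilA N a
  let C : Matrix (Fin N) (Fin N) ℝ :=
    if n = 0 then 0 else nsq S w p n * Aᵀ * (nsq S w p (n - 1))⁻¹
  diagP p n x + A * diagP p (n + 1) x - C * diagP p (n - 1) x
    - x • (diagP p n x * A) + x • (C * diagP p (n - 1) x * A)

/-- Entrywise first derivative of `x ↦ Qₙ(x)`. -/
def matQ' {N : ℕ} (S : Set ℝ) (w : Fin N → ℝ → ℝ) (p : Fin N → ℕ → Polynomial ℝ)
    (a : ℕ → ℝ) (n : ℕ) (x : ℝ) : Matrix (Fin N) (Fin N) ℝ :=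
  Matrix.of fun i j => deriv (fun y => matQ S w p a n y i j) x

/-- Entrywise second derivative of `x ↦ Qₙ(x)`. -/
def matQ'' {N : ℕ} (S : Set ℝ) (w : Fin N → ℝ → ℝ) (p : Fin N → ℕ → Polynomial ℝ)
    (a : ℕ → ℝ) (n : ℕ) (x : ℝ) : Matrix (Fin N) (Fin N) ℝ :=
  Matrix.of fun i j => deriv (fun y => matQ' S w p a n y i j) x


section ScalarPart
open MeasureTheory Polynomial Real Set Filter

namespace LagODE

variable {α : ℝ}

/-- weight -/
def w (α : ℝ) (x : ℝ) : ℝ := Real.exp (-x) * x ^ α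

lemma integrable_poly_mul_w (hα : -1 < α) (q : ℝ[X]) :
    IntegrableOn (fun x => q.eval x * w α x) (Ioi (0:ℝ)) := by
  induction q using Polynomial.induction_on' with
  | add p q hp hq =>
    exact IntegrableOn.congr_fun (hp.add hq) (fun x _ => by simp [eval_add, add_mul]) measurableSet_Ioi
  | monomial k c =>
    have h : (0:ℝ) < (k:ℝ) + α + 1 := by
      have : (0:ℝ) ≤ (k:ℝ) := Nat.cast_nonneg k
      linarith
    have H := (Real.GammaIntegral_convergent h).const_mul c
    apply IntegrableOn.congr_fun H _ measurableSet_Ioi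
    intro x hx
    have hx : (0:ℝ) < x := hx
    have : x ^ ((k:ℝ) + α + 1 - 1) = x ^ (k:ℕ) * x ^ α := by
      rw [show (k:ℝ) + α + 1 - 1 = (k:ℝ) + α by ring, Real.rpow_add hx,
        Real.rpow_natCast]
    simp only [this, w, eval_monomial]
    ring

end LagODE

namespace LagODE

lemma tendsto_poly_weight_top (g : ℝ[X]) (s : ℝ) :
    Tendsto (fun x : ℝ => Real.exp (-x) * x ^ s * g.eval x) atTop (nhds 0) := by
  have h1 : Tendsto (fun x : ℝ => x ^ s * Real.exp (-(1/2) * x)) atTop (nhds 0) :=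
    tendsto_rpow_mul_exp_neg_mul_atTop_nhds_zero s (1/2) (by norm_num)
  have h2 : Tendsto (fun x : ℝ => (g.comp (Polynomial.C 2 * X)).eval x / Real.exp x)
      atTop (nhds 0) := Polynomial.tendsto_div_exp_atTop _
  have h3 : Tendsto (fun x : ℝ => x / 2) atTop atTop :=
    tendsto_id.atTop_div_const (by norm_num)
  have h4 : Tendsto (fun x : ℝ => g.eval x / Real.exp (x/2)) atTop (nhds 0) := by
    have := h2.comp h3
    refine this.congr (fun x => ?_)
    simp [Polynomial.eval_comp]
    ring_nf
  have := h1.mul h4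
  rw [mul_zero] at this
  refine this.congr' ?_
  filter_upwards [eventually_gt_atTop (0:ℝ)] with x hx
  have he : Real.exp (-(1/2)*x) = Real.exp (-x) * Real.exp (x/2) := by
    rw [← Real.exp_add]; ring_nf
  rw [he, Real.exp_neg]
  field_simp

/-- key boundary lemma : integral of a total derivative vanishes -/
lemma integral_deriv_zero (hα : -1 < α) (g : ℝ[X]) :
    ∫ x in Ioi (0:ℝ),
      (((α + 1) - x) * g.eval x + x * g.derivative.eval x) * w α x = 0 := by
  set f : ℝ → ℝ := fun x => Real.exp (-x) * x ^ (α+1) * g.eval x with hf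
  have hα1 : (0:ℝ) < α + 1 := by linarith
  have hderiv : ∀ x ∈ Ioi (0:ℝ), HasDerivAt f
      ((((α + 1) - x) * g.eval x + x * g.derivative.eval x) * w α x) x := by
    intro x hx
    have hx : (0:ℝ) < x := hx
    have h1 : HasDerivAt (fun x : ℝ => Real.exp (-x)) (-Real.exp (-x)) x := by
      simpa using (hasDerivAt_neg x).exp
    have h2 : HasDerivAt (fun x : ℝ => x ^ (α+1)) ((α+1) * x ^ α) x := by
      have := Real.hasDerivAt_rpow_const (x := x) (p := α + 1) (Or.inl hx.ne')
      simpa using this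
    have h3 : HasDerivAt (fun x : ℝ => g.eval x) (g.derivative.eval x) x :=
      g.hasDerivAt x
    have := (h1.mul h2).mul h3
    refine this.congr_deriv ?_
    simp only [Pi.mul_apply]
    have hxx : x ^ (α + 1) = x ^ α * x := Real.rpow_add_one hx.ne' α
    rw [w, hxx]; ring
  have hcont : ContinuousWithinAt f (Ici (0:ℝ)) 0 := by
    apply ContinuousWithinAt.mul
    apply ContinuousWithinAt.mul
    · exact (Real.continuous_exp.comp continuous_neg).continuousWithinAt
    · have : ContinuousAt (fun x : ℝ => x ^ (α+1)) 0 := by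
        apply Real.continuousAt_rpow_const
        right; exact hα1.le
      exact this.continuousWithinAt
    · exact (Polynomial.continuous g).continuousWithinAt
  have htop : Tendsto f atTop (nhds 0) := tendsto_poly_weight_top g (α+1)
  have hint : IntegrableOn
      (fun x => (((α + 1) - x) * g.eval x + x * g.derivative.eval x) * w α x)
      (Ioi (0:ℝ)) := by
    have := integrable_poly_mul_w hα ((Polynomial.C (α+1) - X) * g + X * g.derivative)
    apply this.congr_fun _ measurableSet_Ioi
    intro x _
    simp [eval_mul, eval_add, eval_sub]
  have := integral_Ioi_of_hasDerivAt_of_tendsto hcont hderiv hint htop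
  rw [this, hf]
  simp [Real.zero_rpow hα1.ne']

end LagODE

namespace LagODE

/-- inner product -/
def inn (α : ℝ) (f g : ℝ[X]) : ℝ := ∫ x in Ioi (0:ℝ), f.eval x * g.eval x * w α x

lemma inn_eq (f g : ℝ[X]) : inn α f g = ∫ x in Ioi (0:ℝ), (f*g).eval x * w α x := by
  unfold inn; congr 1; funext x; simp [eval_mul]

lemma inn_comm (f g : ℝ[X]) : inn α f g = inn α g f := by
  unfold inn; congr 1; funext x; ring

lemma inn_add_right (hα : -1 < α) (f g h : ℝ[X]) :
    inn α f (g + h) = inn α f g + inn α f h := by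
  rw [inn_eq, inn_eq, inn_eq, ← integral_add
    (integrable_poly_mul_w hα (f*g)) (integrable_poly_mul_w hα (f*h))]
  congr 1; funext x; simp [eval_mul, eval_add]; ring

lemma inn_smul_right (f g : ℝ[X]) (c : ℝ) :
    inn α f (Polynomial.C c * g) = c * inn α f g := by
  rw [inn_eq, inn_eq, ← MeasureTheory.integral_const_mul]
  congr 1; funext x; simp [eval_mul]; ring

lemma inn_sub_right (hα : -1 < α) (f g h : ℝ[X]) :
    inn α f (g - h) = inn α f g - inn α f h := by
  have h1 := inn_add_right hα f (g - h) h
  simp at h1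
  linarith

/-- the differential operator as polynomial map -/
def Dop (α : ℝ) (u : ℝ[X]) : ℝ[X] :=
  X * derivative (derivative u) + (Polynomial.C (α+1) - X) * derivative u

/-- integration by parts: `⟪Dop u, v⟫ = -∫ x u' v' w` -/
lemma inn_Dop (hα : -1 < α) (u v : ℝ[X]) :
    inn α (Dop α u) v = - ∫ x in Ioi (0:ℝ),
      (X * derivative u * derivative v).eval x * w α x := by
  have hb := integral_deriv_zero hα (derivative u * v)
  have hsplit : ∀ x : ℝ,
      (((α + 1) - x) * (derivative u * v).eval x
        + x * (derivative (derivative u * v)).eval x) * w α x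
      = ((Dop α u) * v).eval x * w α x + (X * derivative u * derivative v).eval x * w α x := by
    intro x
    simp [Dop, derivative_mul, eval_mul, eval_add, eval_sub]
    ring
  rw [show (∫ x in Ioi (0:ℝ), (((α + 1) - x) * (derivative u * v).eval x
        + x * (derivative (derivative u * v)).eval x) * w α x)
      = ∫ x in Ioi (0:ℝ), (((Dop α u) * v).eval x * w α x
        + (X * derivative u * derivative v).eval x * w α x) by
      congr 1; funext x; exact hsplit x] at hb
  rw [integral_add (integrable_poly_mul_w hα _) (integrable_poly_mul_w hα _)] at hb
  rw [inn_eq]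
  linarith

/-- symmetry of the operator -/
lemma inn_Dop_symm (hα : -1 < α) (u v : ℝ[X]) :
    inn α (Dop α u) v = inn α u (Dop α v) := by
  rw [inn_Dop hα u v, inn_comm u (Dop α v), inn_Dop hα v u]
  congr 2
  funext x
  simp only [eval_mul, eval_X]
  ring

end LagODE

namespace LagODE

lemma eq_zero_of_inn_self (hα : -1 < α) (q : ℝ[X]) (h : inn α q q = 0) : q = 0 := by
  by_contra hq
  have hfin : {x : ℝ | q.IsRoot x}.Finite := Polynomial.finite_setOf_isRoot hq
  set F : ℝ → ℝ := fun x => q.eval x * q.eval x * w α x with hF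
  have hFint : IntegrableOn F (Ioi (0:ℝ)) := by
    apply (integrable_poly_mul_w hα (q*q)).congr_fun _ measurableSet_Ioi
    intro x _; simp [hF, eval_mul]
  have hwnn : ∀ x : ℝ, 0 < x → 0 < w α x := fun x hx =>
    mul_pos (Real.exp_pos _) (Real.rpow_pos_of_pos hx _)
  have hnonneg : 0 ≤ᵐ[volume.restrict (Ioi (0:ℝ))] F := by
    rw [EventuallyLE, ae_restrict_iff' measurableSet_Ioi]
    exact ae_of_all _ fun x hx => mul_nonneg (mul_self_nonneg _) (hwnn x hx).le
  have hzero : F =ᵐ[volume.restrict (Ioi (0:ℝ))] 0 :=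
    (integral_eq_zero_iff_of_nonneg_ae hnonneg hFint).1 h
  have hnull : volume.restrict (Ioi (0:ℝ)) {x | F x ≠ 0} = 0 := by
    have := hzero
    rw [Filter.EventuallyEq, ae_iff] at this
    simpa using this
  have hnull2 : volume ({x | F x ≠ 0} ∩ Ioi (0:ℝ)) = 0 := by
    rw [← Measure.restrict_apply₀ (NullMeasurableSet.of_null hnull)]
    exact hnull
  have hsub : Ioi (0:ℝ) \ {x : ℝ | q.IsRoot x} ⊆ {x | F x ≠ 0} ∩ Ioi (0:ℝ) := by
    intro x hx
    refine ⟨?_, hx.1⟩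
    have hx1 : (0:ℝ) < x := hx.1
    have hx2 : q.eval x ≠ 0 := hx.2
    have : 0 < F x := mul_pos (mul_self_pos.2 hx2) (hwnn x hx1)
    exact this.ne'
  have hmono : volume (Ioi (0:ℝ)) ≤
      volume ({x | F x ≠ 0} ∩ Ioi (0:ℝ)) + volume {x : ℝ | q.IsRoot x} := by
    refine le_trans (measure_mono ?_) (measure_union_le _ _)
    intro x hx
    by_cases hr : q.IsRoot x
    · exact Or.inr hr
    · exact Or.inl (hsub ⟨hx, hr⟩)
  rw [hnull2, hfin.measure_zero, Real.volume_Ioi] at hmono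
  simp at hmono

end LagODE

namespace LagODE

lemma span_orth (hα : -1 < α) (p : ℕ → ℝ[X]) (hm : ∀ n, (p n).Monic)
    (hd : ∀ n, (p n).natDegree = n) (r : ℝ[X]) :
    ∀ n : ℕ, (∀ m < n, inn α r (p m) = 0) →
      ∀ q : ℝ[X], (∀ j, n ≤ j → q.coeff j = 0) → inn α r q = 0 := by
  intro n
  induction n with
  | zero =>
    intro _ q hq
    have : q = 0 := Polynomial.ext fun j => hq j (Nat.zero_le j)
    simp [this, inn]
  | succ n ih =>
    intro hr q hq
    set s : ℝ[X] := q - Polynomial.C (q.coeff n) * p n with hs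
    have hpn_coeff : (p n).coeff n = 1 := by
      have := (hm n).coeff_natDegree
      rwa [hd n] at this
    have hscoeff : ∀ j, n ≤ j → s.coeff j = 0 := by
      intro j hj
      rcases eq_or_lt_of_le hj with rfl | hj
      · simp [hs, coeff_sub, coeff_C_mul, hpn_coeff]
      · have h1 : q.coeff j = 0 := hq j hj
        have h2 : (p n).coeff j = 0 := by
          apply coeff_eq_zero_of_natDegree_lt; rw [hd n]; exact hj
        simp [hs, coeff_sub, coeff_C_mul, h1, h2]
    have hih : inn α r s = 0 :=
      ih (fun m hmn => hr m (Nat.lt_succ_of_lt hmn)) s hscoeff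
    have hq_eq : q = s + Polynomial.C (q.coeff n) * p n := by rw [hs]; ring
    rw [hq_eq, inn_add_right hα, hih, inn_smul_right, hr n (Nat.lt_succ_self n)]
    ring

lemma Dop_coeff_bound (u : ℝ[X]) (d : ℕ) (hdu : u.natDegree ≤ d) :
    ∀ j, d < j → (Dop α u).coeff j = 0 := by
  intro j hj
  obtain ⟨jj, rfl⟩ : ∃ jj, j = jj + 1 := ⟨j - 1, by omega⟩
  have hc : ∀ k, d < k → u.coeff k = 0 := fun k hk =>
    coeff_eq_zero_of_natDegree_lt (lt_of_le_of_lt hdu hk)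
  simp only [Dop, coeff_add, coeff_sub, sub_mul, coeff_X_mul, coeff_C_mul,
    coeff_derivative]
  rw [hc (jj + 1 + 1) (by omega), hc (jj + 1) (by omega)]
  ring

theorem ode (hα : -1 < α) (p : ℕ → ℝ[X]) (hm : ∀ n, (p n).Monic)
    (hd : ∀ n, (p n).natDegree = n) (ho : ∀ n m, n ≠ m → inn α (p n) (p m) = 0)
    (n : ℕ) :
    X * derivative (derivative (p n)) + (Polynomial.C (α+1) - X) * derivative (p n)
      + Polynomial.C (n:ℝ) * p n = 0 := by
  set q : ℝ[X] := Dop α (p n) + Polynomial.C (n:ℝ) * p n with hqdef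
  have hqcoeff : ∀ j, n ≤ j → q.coeff j = 0 := by
    intro j hj
    rcases eq_or_lt_of_le hj with rfl | hj
    · -- j = n
      have hpn_coeff : (p n).coeff n = 1 := by
        have := (hm n).coeff_natDegree; rwa [hd n] at this
      have hc : ∀ k, n < k → (p n).coeff k = 0 := fun k hk =>
        coeff_eq_zero_of_natDegree_lt (by rw [hd n]; exact hk)
      rcases Nat.eq_zero_or_pos n with hzero | hpos
      · subst hzero
        simp [hqdef, Dop, coeff_add, coeff_sub, sub_mul, coeff_C_mul,
          mul_coeff_zero, coeff_derivative, hc 1 (by omega)]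
      · obtain ⟨m, hmj⟩ : ∃ m, n = m + 1 := ⟨n - 1, by omega⟩
        rw [hmj] at hpn_coeff hc ⊢
        simp only [hqdef, Dop, coeff_add, coeff_sub, sub_mul, coeff_X_mul,
          coeff_C_mul, coeff_derivative, hmj]
        rw [hc (m + 1 + 1) (by omega), hpn_coeff]
        push_cast
        ring
    · -- j > n
      have h1 := Dop_coeff_bound (α := α) (p n) n (le_of_eq (hd n)) j hj
      have h2 : (p n).coeff j = 0 :=
        coeff_eq_zero_of_natDegree_lt (by rw [hd n]; exact hj)
      simp [hqdef, coeff_add, coeff_C_mul, h1, h2]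
  have horthq : ∀ m < n, inn α q (p m) = 0 := by
    intro m hmn
    have h1 : inn α (Dop α (p n)) (p m) = 0 := by
      rw [inn_Dop_symm hα]
      apply span_orth hα p hm hd (p n) n (fun m' hm' => ho n m' (Nat.ne_of_gt hm'))
      intro j hj
      exact Dop_coeff_bound (α := α) (p m) m (le_of_eq (hd m)) j (lt_of_lt_of_le hmn hj)
    have h2 : inn α (Polynomial.C (n:ℝ) * p n) (p m) = 0 := by
      rw [inn_comm, inn_smul_right, ho m n (by omega)]
      ring
    calc inn α q (p m) = inn α (p m) q := inn_comm _ _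
    _ = inn α (p m) (Dop α (p n)) + inn α (p m) (Polynomial.C (n:ℝ) * p n) := by
        rw [hqdef, inn_add_right hα]
    _ = 0 := by rw [← inn_comm (Dop α (p n)), h1, ← inn_comm (Polynomial.C (n:ℝ) * p n), h2]; ring
  have hqq : inn α q q = 0 :=
    span_orth hα p hm hd q n horthq q hqcoeff
  have := eq_zero_of_inn_self hα q hqq
  rw [hqdef, Dop] at this
  linear_combination this

end LagODE

end ScalarPart

section MatPart
open MeasureTheory Matrix Polynomial
namespace LagMat

variable {N : ℕ} (a : ℕ → ℝ)

/-- kvec -/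
def kv (N : ℕ) : Fin N → ℝ := fun i => if i.val % 2 = 1 then (1:ℝ) else 0

lemma nilA_apply_eq_zero_of_even_col {i k : Fin N} (h : k.val % 2 ≠ 1) :
    nilA N a i k = 0 := by
  simp only [nilA, Matrix.of_apply]
  split_ifs with h1 h2 <;> first | rfl | (exact absurd h1.1 h) | (exact absurd h2.1 h)

lemma nilA_apply_eq_zero_of_odd_row {i k : Fin N} (h : i.val % 2 = 1) :
    nilA N a i k = 0 := by
  simp only [nilA, Matrix.of_apply]
  split_ifs with h1 h2
  · exfalso; omega
  · exfalso; omega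
  · rfl

lemma nilA_mul_diag_mul_nilA (d : Fin N → ℝ) :
    nilA N a * Matrix.diagonal d * nilA N a = 0 := by
  ext i k
  rw [Matrix.mul_apply]
  apply Finset.sum_eq_zero
  intro m _
  rw [Matrix.mul_diagonal]
  by_cases hm : m.val % 2 = 1
  · rw [nilA_apply_eq_zero_of_odd_row a hm]; ring
  · rw [nilA_apply_eq_zero_of_even_col a hm]; ring

lemma nilA_mul_nilA : nilA N a * nilA N a = 0 := by
  have := nilA_mul_diag_mul_nilA (N := N) a (fun _ => (1:ℝ))
  rwa [Matrix.diagonal_one, mul_one] at this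

lemma K_mul_nilA : Matrix.diagonal (kv N) * nilA N a = 0 := by
  ext i k
  rw [Matrix.diagonal_mul]
  by_cases h : i.val % 2 = 1
  · rw [nilA_apply_eq_zero_of_odd_row a h]; simp
  · simp [kv, h]

lemma nilA_mul_diag_K (d : Fin N → ℝ) :
    nilA N a * (Matrix.diagonal d * Matrix.diagonal (kv N)) = nilA N a * Matrix.diagonal d := by
  rw [Matrix.diagonal_mul_diagonal]
  ext i k
  rw [Matrix.mul_diagonal, Matrix.mul_diagonal]
  by_cases h : k.val % 2 = 1
  · simp [kv, h, Pi.mul_apply]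
  · rw [nilA_apply_eq_zero_of_even_col a h]; ring

lemma nilA_mul_K : nilA N a * Matrix.diagonal (kv N) = nilA N a := by
  have := nilA_mul_diag_K (N := N) a (fun _ => (1:ℝ))
  simpa [Matrix.diagonal_one] using this

lemma K_mul_transpose : Matrix.diagonal (kv N) * (nilA N a)ᵀ = (nilA N a)ᵀ := by
  have h := nilA_mul_K (N := N) a
  calc Matrix.diagonal (kv N) * (nilA N a)ᵀ
      = (nilA N a * (Matrix.diagonal (kv N))ᵀ)ᵀ := by
        rw [Matrix.transpose_mul, Matrix.transpose_transpose]
    _ = (nilA N a)ᵀ := by rw [Matrix.diagonal_transpose, h]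

lemma transpose_mul_K : (nilA N a)ᵀ * Matrix.diagonal (kv N) = 0 := by
  calc (nilA N a)ᵀ * Matrix.diagonal (kv N)
      = ((Matrix.diagonal (kv N))ᵀ * nilA N a)ᵀ := by
        rw [Matrix.transpose_mul, Matrix.transpose_transpose]
    _ = 0 := by rw [Matrix.diagonal_transpose, K_mul_nilA a, Matrix.transpose_zero]

end LagMat

namespace LagMat

open Matrix

variable {N : ℕ}

set_option maxHeartbeats 1000000 in
lemma key_algebra (A C : Matrix (Fin N) (Fin N) ℝ) (b k p p' p'' pp pp' pp'' pm pm' pm'' : Fin N → ℝ)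
    (x nr : ℝ)
    (hADA : ∀ d : Fin N → ℝ, A * Matrix.diagonal d * A = 0)
    (hAA : A * A = 0)
    (hKA : Matrix.diagonal k * A = 0)
    (hAK : A * Matrix.diagonal k = A)
    (hADK : ∀ d : Fin N → ℝ, A * Matrix.diagonal (fun i => d i * k i) = A * Matrix.diagonal d)
    (hKC : Matrix.diagonal k * C = C)
    (hCK : C * Matrix.diagonal k = 0)
    (hCDK : ∀ d : Fin N → ℝ, C * Matrix.diagonal (fun i => d i * k i) = 0)
    (hode : x • Matrix.diagonal p'' + (Matrix.diagonal b - x • 1) * Matrix.diagonal p'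
      + nr • Matrix.diagonal p = 0)
    (hodep : x • Matrix.diagonal pp'' + (Matrix.diagonal b - x • 1) * Matrix.diagonal pp'
      + (nr + 1) • Matrix.diagonal pp = 0)
    (hodem : C * (x • Matrix.diagonal pm'' + (Matrix.diagonal b - x • 1) * Matrix.diagonal pm'
      + (nr - 1) • Matrix.diagonal pm) = 0) :
    x • (Matrix.diagonal p'' + A * Matrix.diagonal pp'' - C * Matrix.diagonal pm''
        - ((2:ℝ) • (Matrix.diagonal p' * A) + x • (Matrix.diagonal p'' * A))
        + ((2:ℝ) • (C * Matrix.diagonal pm' * A) + x • (C * Matrix.diagonal pm'' * A)))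
    + (Matrix.diagonal p' + A * Matrix.diagonal pp' - C * Matrix.diagonal pm'
        - (Matrix.diagonal p * A + x • (Matrix.diagonal p' * A))
        + (C * Matrix.diagonal pm * A + x • (C * Matrix.diagonal pm' * A)))
      * (Matrix.diagonal b - x • 1 + (2 * x) • A
          + x • (A * Matrix.diagonal b - Matrix.diagonal b * A))
    + (Matrix.diagonal p + A * Matrix.diagonal pp - C * Matrix.diagonal pm
        - x • (Matrix.diagonal p * A) + x • (C * Matrix.diagonal pm * A))
      * (A * Matrix.diagonal b + Matrix.diagonal k)
    = ((-nr) • (1 : Matrix (Fin N) (Fin N) ℝ) + Matrix.diagonal k)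
      * (Matrix.diagonal p + A * Matrix.diagonal pp - C * Matrix.diagonal pm
        - x • (Matrix.diagonal p * A) + x • (C * Matrix.diagonal pm * A)) := by
  have zADA : ∀ (d : Fin N → ℝ), A * (Matrix.diagonal d * A) = 0 := fun d => by
    rw [← mul_assoc, hADA]
  have zADAM : ∀ (d : Fin N → ℝ) (M : Matrix (Fin N) (Fin N) ℝ),
      A * (Matrix.diagonal d * (A * M)) = 0 := fun d M => by
    rw [← mul_assoc, ← mul_assoc, hADA, zero_mul]
  have zAAM : ∀ (M : Matrix (Fin N) (Fin N) ℝ), A * (A * M) = 0 := fun M => by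
    rw [← mul_assoc, hAA, zero_mul]
  have zKAM : ∀ (M : Matrix (Fin N) (Fin N) ℝ),
      Matrix.diagonal k * (A * M) = 0 := fun M => by
    rw [← mul_assoc, hKA, zero_mul]
  have zKCM : ∀ (M : Matrix (Fin N) (Fin N) ℝ),
      Matrix.diagonal k * (C * M) = C * M := fun M => by
    rw [← mul_assoc, hKC]
  have zAKM : ∀ (M : Matrix (Fin N) (Fin N) ℝ),
      A * (Matrix.diagonal k * M) = A * M := fun M => by
    rw [← mul_assoc, hAK]
  have hADK2 : ∀ d : Fin N → ℝ, A * Matrix.diagonal (fun i => k i * d i) = A * Matrix.diagonal d :=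
    fun d => by rw [show (fun i => k i * d i) = (fun i => d i * k i) from funext fun i => mul_comm _ _]; exact hADK d
  have hCDK2 : ∀ d : Fin N → ℝ, C * Matrix.diagonal (fun i => k i * d i) = 0 :=
    fun d => by rw [show (fun i => k i * d i) = (fun i => d i * k i) from funext fun i => mul_comm _ _]; exact hCDK d
  have dDD : ∀ (f g : Fin N → ℝ) (M : Matrix (Fin N) (Fin N) ℝ),
      Matrix.diagonal f * (Matrix.diagonal g * M) = Matrix.diagonal (fun i => f i * g i) * M :=
    fun f g M => by rw [← mul_assoc, Matrix.diagonal_mul_diagonal]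
  have zKDA : ∀ d : Fin N → ℝ, (Matrix.diagonal fun i => k i * d i) * A = 0 := fun d => by
    have hd : (Matrix.diagonal fun i => k i * d i) = Matrix.diagonal d * Matrix.diagonal k := by
      rw [Matrix.diagonal_mul_diagonal]
      exact congrArg Matrix.diagonal (funext fun i => mul_comm _ _)
    rw [hd, mul_assoc, hKA, mul_zero]
  have zKDA2 : ∀ d : Fin N → ℝ, (Matrix.diagonal fun i => d i * k i) * A = 0 := fun d => by
    have hd : (Matrix.diagonal fun i => d i * k i) = Matrix.diagonal d * Matrix.diagonal k := by
      rw [Matrix.diagonal_mul_diagonal]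
    rw [hd, mul_assoc, hKA, mul_zero]
  have zKDAM : ∀ (d : Fin N → ℝ) (M : Matrix (Fin N) (Fin N) ℝ),
      (Matrix.diagonal fun i => k i * d i) * (A * M) = 0 := fun d M => by
    rw [← mul_assoc, zKDA, zero_mul]
  have zKDAM2 : ∀ (d : Fin N → ℝ) (M : Matrix (Fin N) (Fin N) ℝ),
      (Matrix.diagonal fun i => d i * k i) * (A * M) = 0 := fun d M => by
    rw [← mul_assoc, zKDA2, zero_mul]
  rw [← sub_eq_zero]
  have key : ∀ D1 D2 D3 : Matrix (Fin N) (Fin N) ℝ,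
      D1 = x • Matrix.diagonal p'' + (Matrix.diagonal b - x • 1) * Matrix.diagonal p'
        + nr • Matrix.diagonal p →
      D2 = x • Matrix.diagonal pp'' + (Matrix.diagonal b - x • 1) * Matrix.diagonal pp'
        + (nr + 1) • Matrix.diagonal pp →
      D3 = C * (x • Matrix.diagonal pm'' + (Matrix.diagonal b - x • 1) * Matrix.diagonal pm'
        + (nr - 1) • Matrix.diagonal pm) →
      (x • (Matrix.diagonal p'' + A * Matrix.diagonal pp'' - C * Matrix.diagonal pm''
        - ((2:ℝ) • (Matrix.diagonal p' * A) + x • (Matrix.diagonal p'' * A))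
        + ((2:ℝ) • (C * Matrix.diagonal pm' * A) + x • (C * Matrix.diagonal pm'' * A)))
      + (Matrix.diagonal p' + A * Matrix.diagonal pp' - C * Matrix.diagonal pm'
          - (Matrix.diagonal p * A + x • (Matrix.diagonal p' * A))
          + (C * Matrix.diagonal pm * A + x • (C * Matrix.diagonal pm' * A)))
        * (Matrix.diagonal b - x • 1 + (2 * x) • A
            + x • (A * Matrix.diagonal b - Matrix.diagonal b * A))
      + (Matrix.diagonal p + A * Matrix.diagonal pp - C * Matrix.diagonal pm
          - x • (Matrix.diagonal p * A) + x • (C * Matrix.diagonal pm * A))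
        * (A * Matrix.diagonal b + Matrix.diagonal k))
      - ((-nr) • (1 : Matrix (Fin N) (Fin N) ℝ) + Matrix.diagonal k)
        * (Matrix.diagonal p + A * Matrix.diagonal pp - C * Matrix.diagonal pm
          - x • (Matrix.diagonal p * A) + x • (C * Matrix.diagonal pm * A))
      = D1 + A * D2 - D3 + (-x) • (D1 * A) + x • (D3 * A) := by
    intro D1 D2 D3 h1 h2 h3
    subst h1; subst h2; subst h3
    simp only [mul_add, add_mul, mul_sub, sub_mul, neg_mul, mul_neg, smul_add,
      smul_sub, smul_neg, neg_smul, mul_smul_comm, smul_mul_assoc, smul_smul,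
      mul_assoc, mul_one, one_mul, Matrix.diagonal_mul_diagonal, dDD,
      zADA, zADAM, zAAM, zKAM, zKCM, zAKM, hAA, hKA, hAK, hADK, hADK2, hCDK, hCDK2,
      hKC, hCK, zKDA, zKDA2, zKDAM, zKDAM2, mul_zero, zero_mul, smul_zero, add_zero, zero_add, sub_zero,
      zero_sub, neg_zero, neg_neg]
    simp only [mul_comm]
    module
  rw [key _ _ _ rfl rfl rfl, hode, hodep, hodem]
  simp

end LagMat

namespace LagMat

open Polynomial

variable {N : ℕ} (A C : Matrix (Fin N) (Fin N) ℝ) (u v z u' v' z' u'' v'' z'' : Fin N → ℝ[X])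

/-- polynomial giving entries of the Q-shape matrix -/
def qpol (i j : Fin N) : ℝ[X] :=
  (if i = j then u i else 0) + Polynomial.C (A i j) * v j - Polynomial.C (C i j) * z j
  - X * (u i * Polynomial.C (A i j))
  + X * ∑ m : Fin N, Polynomial.C (C i m) * z m * Polynomial.C (A m j)

/-- polynomial giving entries of the Q'-shape matrix -/
def qpol1 (i j : Fin N) : ℝ[X] :=
  (if i = j then u' i else 0) + Polynomial.C (A i j) * v' j - Polynomial.C (C i j) * z' j
  - (u i * Polynomial.C (A i j) + X * (u' i * Polynomial.C (A i j)))
  + ((∑ m : Fin N, Polynomial.C (C i m) * z m * Polynomial.C (A m j))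
      + X * ∑ m : Fin N, Polynomial.C (C i m) * z' m * Polynomial.C (A m j))

/-- polynomial giving entries of the Q''-shape matrix -/
def qpol2 (i j : Fin N) : ℝ[X] :=
  (if i = j then u'' i else 0) + Polynomial.C (A i j) * v'' j - Polynomial.C (C i j) * z'' j
  - ((2:ℝ[X]) * (u' i * Polynomial.C (A i j)) + X * (u'' i * Polynomial.C (A i j)))
  + ((2:ℝ[X]) * (∑ m : Fin N, Polynomial.C (C i m) * z' m * Polynomial.C (A m j))
      + X * ∑ m : Fin N, Polynomial.C (C i m) * z'' m * Polynomial.C (A m j))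

lemma entry_eval0 (y : ℝ) (i j : Fin N) :
    (Matrix.diagonal (fun i => (u i).eval y) + A * Matrix.diagonal (fun i => (v i).eval y)
      - C * Matrix.diagonal (fun i => (z i).eval y)
      - y • (Matrix.diagonal (fun i => (u i).eval y) * A)
      + y • (C * Matrix.diagonal (fun i => (z i).eval y) * A)) i j
    = (qpol A C u v z i j).eval y := by
  simp only [qpol, Matrix.add_apply, Matrix.sub_apply, Matrix.smul_apply,
    Matrix.mul_diagonal, Matrix.diagonal_mul, Matrix.diagonal_apply, Matrix.mul_apply,
    eval_add, eval_sub, eval_mul, eval_X, eval_C, eval_finset_sum, smul_eq_mul,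
    apply_ite (Polynomial.eval y), eval_zero, mul_ite, ite_mul, mul_zero, zero_mul,
    Finset.sum_ite_eq, Finset.sum_ite_eq', Finset.mem_univ, if_true, Finset.mul_sum]

lemma entry_eval1 (y : ℝ) (i j : Fin N) :
    (Matrix.diagonal (fun i => (u' i).eval y) + A * Matrix.diagonal (fun i => (v' i).eval y)
      - C * Matrix.diagonal (fun i => (z' i).eval y)
      - (Matrix.diagonal (fun i => (u i).eval y) * A
          + y • (Matrix.diagonal (fun i => (u' i).eval y) * A))
      + (C * Matrix.diagonal (fun i => (z i).eval y) * A
          + y • (C * Matrix.diagonal (fun i => (z' i).eval y) * A))) i j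
    = (qpol1 A C u z u' v' z' i j).eval y := by
  simp only [qpol1, Matrix.add_apply, Matrix.sub_apply, Matrix.smul_apply,
    Matrix.mul_diagonal, Matrix.diagonal_mul, Matrix.diagonal_apply, Matrix.mul_apply,
    eval_add, eval_sub, eval_mul, eval_X, eval_C, eval_finset_sum, smul_eq_mul,
    apply_ite (Polynomial.eval y), eval_zero, mul_ite, ite_mul, mul_zero, zero_mul,
    Finset.sum_ite_eq, Finset.sum_ite_eq', Finset.mem_univ, if_true, Finset.mul_sum]

lemma entry_eval2 (y : ℝ) (i j : Fin N) :
    (Matrix.diagonal (fun i => (u'' i).eval y) + A * Matrix.diagonal (fun i => (v'' i).eval y)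
      - C * Matrix.diagonal (fun i => (z'' i).eval y)
      - ((2:ℝ) • (Matrix.diagonal (fun i => (u' i).eval y) * A)
          + y • (Matrix.diagonal (fun i => (u'' i).eval y) * A))
      + ((2:ℝ) • (C * Matrix.diagonal (fun i => (z' i).eval y) * A)
          + y • (C * Matrix.diagonal (fun i => (z'' i).eval y) * A))) i j
    = (qpol2 A C u' z' u'' v'' z'' i j).eval y := by
  simp only [qpol2, Matrix.add_apply, Matrix.sub_apply, Matrix.smul_apply,
    Matrix.mul_diagonal, Matrix.diagonal_mul, Matrix.diagonal_apply, Matrix.mul_apply,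
    eval_add, eval_sub, eval_mul, eval_X, eval_C, eval_finset_sum, smul_eq_mul,
    apply_ite (Polynomial.eval y), eval_zero, mul_ite, ite_mul, mul_zero, zero_mul,
    Finset.sum_ite_eq, Finset.sum_ite_eq', Finset.mem_univ, if_true, Finset.mul_sum, eval_ofNat]

lemma qpol_derivative (i j : Fin N) :
    derivative (qpol A C u v z i j)
      = qpol1 A C u z (fun i => derivative (u i)) (fun i => derivative (v i))
          (fun i => derivative (z i)) i j := by
  by_cases hij : i = j <;>
    simp [qpol, qpol1, hij, derivative_mul, Polynomial.derivative_sum,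
      Finset.sum_add_distrib] <;> ring

lemma qpol1_derivative (i j : Fin N) :
    derivative (qpol1 A C u z (fun i => derivative (u i)) v' (fun i => derivative (z i)) i j)
      = qpol2 A C (fun i => derivative (u i)) (fun i => derivative (z i))
          (fun i => derivative (derivative (u i))) (fun i => derivative (v' i))
          (fun i => derivative (derivative (z i))) i j := by
  by_cases hij : i = j <;>
    simp [qpol1, qpol2, hij, derivative_mul, Polynomial.derivative_sum,
      Finset.sum_add_distrib] <;> ring

end LagMat

namespace LagMat
open Matrix
variable {N : ℕ} (a : ℕ → ℝ)

lemma sandwich_apply (d e : Fin N → ℝ) (i j : Fin N) :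
    (Matrix.diagonal d * (nilA N a)ᵀ * Matrix.diagonal e) i j
      = d i * nilA N a j i * e j := by
  rw [Matrix.mul_diagonal, Matrix.diagonal_mul, Matrix.transpose_apply]

lemma K_mul_sandwich (d e : Fin N → ℝ) :
    Matrix.diagonal (kv N) * (Matrix.diagonal d * (nilA N a)ᵀ * Matrix.diagonal e)
      = Matrix.diagonal d * (nilA N a)ᵀ * Matrix.diagonal e := by
  ext i j
  rw [Matrix.diagonal_mul, sandwich_apply]
  by_cases h : i.val % 2 = 1
  · simp [kv, h]
  · rw [nilA_apply_eq_zero_of_even_col a h]; simp [kv, h]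

lemma sandwich_mul_diag_K (d e f : Fin N → ℝ) :
    (Matrix.diagonal d * (nilA N a)ᵀ * Matrix.diagonal e)
      * Matrix.diagonal (fun i => f i * kv N i) = 0 := by
  ext i j
  rw [Matrix.mul_diagonal, sandwich_apply]
  by_cases h : j.val % 2 = 1
  · rw [nilA_apply_eq_zero_of_odd_row a h]; simp
  · simp [kv, h]

lemma sandwich_mul_K (d e : Fin N → ℝ) :
    (Matrix.diagonal d * (nilA N a)ᵀ * Matrix.diagonal e) * Matrix.diagonal (kv N) = 0 := by
  have := sandwich_mul_diag_K a d e (fun _ => (1:ℝ))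
  simpa using this

end LagMat

end MatPart

/-- Laguerre-type matrix orthogonal polynomials are eigenfunctions of the
second-order differential operator
`D = ∂² x I + ∂ (B_L − xI + 2xA + x[A,B_L]) + A B_L + K`, with eigenvalue
`Λₙ = diag(λ₁,…,λ_N)`, `λᵢ = −n` for `i` odd and `λᵢ = −n+1` for `i` even
(1-based `i`). -/
theorem laguerre_type_eigenfunction
    (N : ℕ) (α : Fin N → ℝ) (hα : ∀ i, -1 < α i)
    (a : ℕ → ℝ) (ha : ∀ k, 1 ≤ k → k ≤ N - 1 → a k ≠ 0)
    (ℓ : Fin N → ℕ → Polynomial ℝ)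
    (hmonic : ∀ i n, (ℓ i n).Monic)
    (hdeg : ∀ i n, (ℓ i n).natDegree = n)
    (horth : ∀ i, ∀ n m : ℕ, n ≠ m →
      ∫ x in Set.Ioi (0 : ℝ),
        (ℓ i n).eval x * (ℓ i m).eval x * (Real.exp (-x) * x ^ α i) = 0) :
    ∀ (n : ℕ) (x : ℝ),
      x • matQ'' (Set.Ioi 0) (fun i y => Real.exp (-y) * y ^ α i) ℓ a n x
      + matQ' (Set.Ioi 0) (fun i y => Real.exp (-y) * y ^ α i) ℓ a n x *
          (Matrix.diagonal (fun i => α i + 1)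
            - x • (1 : Matrix (Fin N) (Fin N) ℝ)
            + (2 * x) • nilA N a
            + x • (nilA N a * Matrix.diagonal (fun i => α i + 1)
                - Matrix.diagonal (fun i => α i + 1) * nilA N a))
      + matQ (Set.Ioi 0) (fun i y => Real.exp (-y) * y ^ α i) ℓ a n x *
          (nilA N a * Matrix.diagonal (fun i => α i + 1)
            + Matrix.diagonal (fun i : Fin N => if i.val % 2 = 1 then (1 : ℝ) else 0))
      = Matrix.diagonal (fun i : Fin N =>
          if i.val % 2 = 1 then -(n : ℝ) + 1 else -(n : ℝ)) *
          matQ (Set.Ioi 0) (fun i y => Real.exp (-y) * y ^ α i) ℓ a n x := by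
  intro n x
  classical
  -- notation
  set k : Fin N → ℝ := LagMat.kv N with hk
  have hkk : (fun i : Fin N => if i.val % 2 = 1 then (1:ℝ) else 0) = k := rfl
  set b : Fin N → ℝ := fun i => α i + 1 with hb
  set wfun : Fin N → ℝ → ℝ := fun i y => Real.exp (-y) * y ^ α i with hwfun
  set Amat : Matrix (Fin N) (Fin N) ℝ := nilA N a with hA
  set Cdef : Matrix (Fin N) (Fin N) ℝ :=
    if n = 0 then 0 else
      nsq (Set.Ioi 0) wfun ℓ n * Amatᵀ * (nsq (Set.Ioi 0) wfun ℓ (n - 1))⁻¹ with hC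
  -- scalar ODEs
  have odei : ∀ (i : Fin N) (m : ℕ),
      X * derivative (derivative (ℓ i m)) + (Polynomial.C (α i + 1) - X) * derivative (ℓ i m)
        + Polynomial.C (m:ℝ) * ℓ i m = 0 := by
    intro i m
    refine LagODE.ode (hα i) (ℓ i) (hmonic i) (hdeg i) ?_ m
    intro n' m' hnm
    have := horth i n' m' hnm
    simpa [LagODE.inn, LagODE.w] using this
  -- matrix-level ODE
  have odeMat : ∀ (f : Fin N → ℝ[X]) (c : ℝ),
      (∀ i, X * derivative (derivative (f i)) + (Polynomial.C (α i + 1) - X) * derivative (f i)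
        + Polynomial.C c * f i = 0) →
      x • Matrix.diagonal (fun i => (derivative (derivative (f i))).eval x)
        + (Matrix.diagonal b - x • 1) * Matrix.diagonal (fun i => (derivative (f i)).eval x)
        + c • Matrix.diagonal (fun i => (f i).eval x) = 0 := by
    intro f c h
    ext i j
    by_cases hij : i = j
    · subst hij
      have h2 := congrArg (Polynomial.eval x) (h i)
      simp only [eval_add, eval_mul, eval_sub, eval_X, eval_C, eval_zero] at h2
      simp only [Matrix.sub_mul, Matrix.smul_mul, Matrix.diagonal_mul_diagonal, one_mul,
        Matrix.add_apply, Matrix.sub_apply, Matrix.smul_apply, Matrix.diagonal_apply_eq,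
        Matrix.zero_apply, Pi.mul_apply, smul_eq_mul, hb]
      linear_combination h2
    · simp only [Matrix.sub_mul, Matrix.smul_mul, Matrix.diagonal_mul_diagonal, one_mul,
        Matrix.add_apply, Matrix.sub_apply, Matrix.smul_apply,
        Matrix.diagonal_apply_ne _ hij, Matrix.zero_apply, smul_eq_mul]
      ring
  -- polynomial families
  set u : Fin N → ℝ[X] := fun i => ℓ i n with hu
  set v : Fin N → ℝ[X] := fun i => ℓ i (n+1) with hv
  set z : Fin N → ℝ[X] := fun i => ℓ i (n-1) with hz
  -- shape of matQ
  have hQ0 : ∀ y : ℝ, matQ (Set.Ioi 0) wfun ℓ a n y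
      = Matrix.diagonal (fun i => (u i).eval y) + Amat * Matrix.diagonal (fun i => (v i).eval y)
        - Cdef * Matrix.diagonal (fun i => (z i).eval y)
        - y • (Matrix.diagonal (fun i => (u i).eval y) * Amat)
        + y • (Cdef * Matrix.diagonal (fun i => (z i).eval y) * Amat) := by
    intro y; rfl
  have hent0 : ∀ (y : ℝ) (i j : Fin N), matQ (Set.Ioi 0) wfun ℓ a n y i j
      = (LagMat.qpol Amat Cdef u v z i j).eval y := by
    intro y i j
    rw [hQ0 y]
    exact LagMat.entry_eval0 Amat Cdef u v z y i j
  have hent1 : ∀ (y : ℝ) (i j : Fin N), matQ' (Set.Ioi 0) wfun ℓ a n y i j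
      = (LagMat.qpol1 Amat Cdef u z (fun i => derivative (u i)) (fun i => derivative (v i))
          (fun i => derivative (z i)) i j).eval y := by
    intro y i j
    show deriv (fun t => matQ (Set.Ioi 0) wfun ℓ a n t i j) y = _
    have hfun : (fun t => matQ (Set.Ioi 0) wfun ℓ a n t i j)
        = fun t => (LagMat.qpol Amat Cdef u v z i j).eval t :=
      funext fun t => hent0 t i j
    rw [hfun, Polynomial.deriv, LagMat.qpol_derivative]
  have hent2 : ∀ (i j : Fin N), matQ'' (Set.Ioi 0) wfun ℓ a n x i j
      = (LagMat.qpol2 Amat Cdef (fun i => derivative (u i)) (fun i => derivative (z i))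
          (fun i => derivative (derivative (u i))) (fun i => derivative (derivative (v i)))
          (fun i => derivative (derivative (z i))) i j).eval x := by
    intro i j
    show deriv (fun t => matQ' (Set.Ioi 0) wfun ℓ a n t i j) x = _
    have hfun : (fun t => matQ' (Set.Ioi 0) wfun ℓ a n t i j)
        = fun t => (LagMat.qpol1 Amat Cdef u z (fun i => derivative (u i))
            (fun i => derivative (v i)) (fun i => derivative (z i)) i j).eval t :=
      funext fun t => hent1 t i j
    rw [hfun, Polynomial.deriv, LagMat.qpol1_derivative]
  -- matrix forms
  have hM1 : matQ' (Set.Ioi 0) wfun ℓ a n x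
      = Matrix.diagonal (fun i => (derivative (u i)).eval x)
        + Amat * Matrix.diagonal (fun i => (derivative (v i)).eval x)
        - Cdef * Matrix.diagonal (fun i => (derivative (z i)).eval x)
        - (Matrix.diagonal (fun i => (u i).eval x) * Amat
            + x • (Matrix.diagonal (fun i => (derivative (u i)).eval x) * Amat))
        + (Cdef * Matrix.diagonal (fun i => (z i).eval x) * Amat
            + x • (Cdef * Matrix.diagonal (fun i => (derivative (z i)).eval x) * Amat)) := by
    ext i j
    rw [hent1 x i j]
    exact (LagMat.entry_eval1 Amat Cdef u z (fun i => derivative (u i))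
      (fun i => derivative (v i)) (fun i => derivative (z i)) x i j).symm
  have hM2 : matQ'' (Set.Ioi 0) wfun ℓ a n x
      = Matrix.diagonal (fun i => (derivative (derivative (u i))).eval x)
        + Amat * Matrix.diagonal (fun i => (derivative (derivative (v i))).eval x)
        - Cdef * Matrix.diagonal (fun i => (derivative (derivative (z i))).eval x)
        - ((2:ℝ) • (Matrix.diagonal (fun i => (derivative (u i)).eval x) * Amat)
            + x • (Matrix.diagonal (fun i => (derivative (derivative (u i))).eval x) * Amat))
        + ((2:ℝ) • (Cdef * Matrix.diagonal (fun i => (derivative (z i)).eval x) * Amat)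
            + x • (Cdef * Matrix.diagonal (fun i => (derivative (derivative (z i))).eval x) * Amat)) := by
    ext i j
    rw [hent2 i j]
    exact (LagMat.entry_eval2 Amat Cdef (fun i => derivative (u i)) (fun i => derivative (z i))
      (fun i => derivative (derivative (u i))) (fun i => derivative (derivative (v i)))
      (fun i => derivative (derivative (z i))) x i j).symm
  -- structural facts about Cdef
  have hKC : Matrix.diagonal k * Cdef = Cdef := by
    rcases Nat.eq_zero_or_pos n with h0 | hpos
    · simp [hC, h0]
    · rw [hC, if_neg (by omega)]
      rw [show nsq (Set.Ioi 0) wfun ℓ n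
          = Matrix.diagonal (fun i => ∫ t in Set.Ioi (0:ℝ), (ℓ i n).eval t ^ 2 * wfun i t)
          from rfl,
        show (nsq (Set.Ioi 0) wfun ℓ (n-1))⁻¹
          = (Matrix.diagonal (fun i => ∫ t in Set.Ioi (0:ℝ), (ℓ i (n-1)).eval t ^ 2 * wfun i t))⁻¹
          from rfl, Matrix.inv_diagonal]
      exact LagMat.K_mul_sandwich a _ _
  have hCK : Cdef * Matrix.diagonal k = 0 := by
    rcases Nat.eq_zero_or_pos n with h0 | hpos
    · simp [hC, h0]
    · rw [hC, if_neg (by omega)]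
      rw [show nsq (Set.Ioi 0) wfun ℓ n
          = Matrix.diagonal (fun i => ∫ t in Set.Ioi (0:ℝ), (ℓ i n).eval t ^ 2 * wfun i t)
          from rfl,
        show (nsq (Set.Ioi 0) wfun ℓ (n-1))⁻¹
          = (Matrix.diagonal (fun i => ∫ t in Set.Ioi (0:ℝ), (ℓ i (n-1)).eval t ^ 2 * wfun i t))⁻¹
          from rfl, Matrix.inv_diagonal]
      exact LagMat.sandwich_mul_K a _ _
  have hCDK : ∀ d : Fin N → ℝ, Cdef * Matrix.diagonal (fun i => d i * k i) = 0 := by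
    intro d
    rcases Nat.eq_zero_or_pos n with h0 | hpos
    · simp [hC, h0]
    · rw [hC, if_neg (by omega)]
      rw [show nsq (Set.Ioi 0) wfun ℓ n
          = Matrix.diagonal (fun i => ∫ t in Set.Ioi (0:ℝ), (ℓ i n).eval t ^ 2 * wfun i t)
          from rfl,
        show (nsq (Set.Ioi 0) wfun ℓ (n-1))⁻¹
          = (Matrix.diagonal (fun i => ∫ t in Set.Ioi (0:ℝ), (ℓ i (n-1)).eval t ^ 2 * wfun i t))⁻¹
          from rfl, Matrix.inv_diagonal]
      exact LagMat.sandwich_mul_diag_K a _ _ d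
  -- ODE hypotheses
  have hode : x • Matrix.diagonal (fun i => (derivative (derivative (u i))).eval x)
      + (Matrix.diagonal b - x • 1) * Matrix.diagonal (fun i => (derivative (u i)).eval x)
      + (n:ℝ) • Matrix.diagonal (fun i => (u i).eval x) = 0 :=
    odeMat u (n:ℝ) (fun i => odei i n)
  have hodep : x • Matrix.diagonal (fun i => (derivative (derivative (v i))).eval x)
      + (Matrix.diagonal b - x • 1) * Matrix.diagonal (fun i => (derivative (v i)).eval x)
      + ((n:ℝ) + 1) • Matrix.diagonal (fun i => (v i).eval x) = 0 := by
    refine odeMat v ((n:ℝ)+1) (fun i => ?_)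
    have := odei i (n+1)
    push_cast at this
    exact this
  have hodem : Cdef * (x • Matrix.diagonal (fun i => (derivative (derivative (z i))).eval x)
      + (Matrix.diagonal b - x • 1) * Matrix.diagonal (fun i => (derivative (z i)).eval x)
      + ((n:ℝ) - 1) • Matrix.diagonal (fun i => (z i).eval x)) = 0 := by
    rcases Nat.eq_zero_or_pos n with h0 | hpos
    · simp [hC, h0]
    · have hcast : ((n - 1 : ℕ) : ℝ) = (n:ℝ) - 1 := by
        rw [Nat.cast_sub (by omega), Nat.cast_one]
      have h1 := odeMat z ((n:ℝ) - 1) (fun i => by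
        have := odei i (n-1)
        rwa [hcast] at this)
      rw [h1, mul_zero]
  -- eigenvalue matrix
  have hLam : Matrix.diagonal (fun i : Fin N => if i.val % 2 = 1 then -(n:ℝ) + 1 else -(n:ℝ))
      = (-(n:ℝ)) • (1 : Matrix (Fin N) (Fin N) ℝ) + Matrix.diagonal k := by
    ext i j
    by_cases hij : i = j
    · subst hij
      simp only [Matrix.diagonal_apply_eq, Matrix.add_apply, Matrix.smul_apply,
        Matrix.one_apply_eq, smul_eq_mul, mul_one, hk, LagMat.kv]
      split_ifs <;> ring
    · simp [Matrix.diagonal_apply_ne _ hij, Matrix.one_apply_ne hij]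
  -- finish
  rw [hM2, hM1, hQ0 x, hkk, hLam]
  exact LagMat.key_algebra Amat Cdef b k
    (fun i => (u i).eval x) (fun i => (derivative (u i)).eval x)
    (fun i => (derivative (derivative (u i))).eval x)
    (fun i => (v i).eval x) (fun i => (derivative (v i)).eval x)
    (fun i => (derivative (derivative (v i))).eval x)
    (fun i => (z i).eval x) (fun i => (derivative (z i)).eval x)
    (fun i => (derivative (derivative (z i))).eval x)
    x (n:ℝ)
    (LagMat.nilA_mul_diag_mul_nilA a) (LagMat.nilA_mul_nilA a)
    (LagMat.K_mul_nilA a) (LagMat.nilA_mul_K a)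
    (fun d => by
      have := LagMat.nilA_mul_diag_K (N := N) a d
      rwa [Matrix.diagonal_mul_diagonal] at this)
    hKC hCK hCDK hode hodep hodem


end
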